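/- Let s > −1/2 be real and N ≥ 1 an integer. Then for every x ∈ ℝ, (d/dx)[(1+x²)·ρ_N^s(x)] = −2s · γ²_{N−1,s} · φ_N^s(x) · p_N^{s,N}(x) · p_{N−1}^{s,N}(x). -/

import Mathlib

open MeasureTheory Real Filter

noncomputable section

/-- Pochhammer symbol `(a)_j = a(a+1)⋯(a+j-1)` for complex `a`. -/
def poch (a : ℂ) (j : ℕ) : ℂ := ∏ i ∈ Finset.range j, (a + i)

/-- The monic pseudo-Jacobi polynomial `p_m^{s,N}` (complex-valued formula). -/
def pJC (s : ℝ) (N m : ℕ) (x : ℝ) : ℂ :=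
  ∑ j ∈ Finset.range (m + 1),
    poch (-(m : ℂ)) j * poch ((s : ℂ) + N - m) j /
      (poch (2 * (s : ℂ) + 2 * N - 2 * m) j * (Nat.factorial j : ℂ)) *
    (-2 * Complex.I) ^ j * ((x : ℂ) - Complex.I) ^ (m - j)

/-- The pseudo-Jacobi polynomial as a real-valued function (it has real values
for real `s` and real `x`). -/
def pJ (s : ℝ) (N m : ℕ) (x : ℝ) : ℝ := (pJC s N m x).re

/-- The pseudo-Jacobi weight `φ_N^s(x) = (1+x²)^{-(N+s)}`. -/
def phi (s : ℝ) (N : ℕ) (x : ℝ) : ℝ := (1 + x ^ 2) ^ (-((N : ℝ) + s))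

/-- The normalizing constant `γ²_{N-1,s}`. -/
def gammaSq (s : ℝ) (N : ℕ) : ℝ :=
  (2 : ℝ) ^ (2 * s) / Real.pi * Real.Gamma (2 * s + N + 1) * Real.Gamma (s + 1) ^ 2 /
    (Real.Gamma N * Real.Gamma (2 * s + 1) * Real.Gamma (2 * s + 2))

/-- The one-point density of the generalized Cauchy (Hua–Pickrell) ensemble. -/
def rho (s : ℝ) (N : ℕ) (x : ℝ) : ℝ :=
  gammaSq s N * phi s N x *
    (pJ s N (N - 1) x * deriv (pJ s N N) x - pJ s N N x * deriv (pJ s N (N - 1)) x)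

/-- The sum of moments `Q(k;s,N) = ∫_ℝ |x|^{2k}(1+x²)ρ_N^s(x) dx`,
with `|x|^{2k} = exp(2k log|x|)`. -/
def Qmom (k : ℂ) (s : ℝ) (N : ℕ) : ℂ :=
  ∫ x : ℝ, Complex.exp (2 * k * Real.log |x|) * (((1 + x ^ 2) * rho s N x : ℝ) : ℂ)

/-- `J(k;s,N) = Q(k;s,N)/(Γ(k+1/2)Γ(s-k-1/2))`. -/
def Jmom (k : ℂ) (s : ℝ) (N : ℕ) : ℂ :=
  Qmom k s N / (Complex.Gamma (k + 1 / 2) * Complex.Gamma ((s : ℂ) - k - 1 / 2))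

/-- The continuous-Hahn polynomial `S_n(x;a,b,c,d)`. -/
def contHahn (n : ℕ) (x a b c d : ℂ) : ℂ :=
  Complex.I ^ n * (poch (a + c) n * poch (a + d) n / (Nat.factorial n : ℂ)) *
    ∑ j ∈ Finset.range (n + 1),
      poch (-(n : ℂ)) j * poch (n + a + b + c + d - 1) j * poch (a + Complex.I * x) j /
        (poch (a + c) j * poch (a + d) j * (Nat.factorial j : ℂ))

end

noncomputable section


noncomputable section Aux
open Finset

lemma poch_succ (a : ℂ) (j : ℕ) : poch a (j+1) = poch a j * (a + j) :=
  Finset.prod_range_succ _ _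

lemma poch_zero_left {j : ℕ} (hj : 1 ≤ j) : poch 0 j = 0 := by
  apply Finset.prod_eq_zero (Finset.mem_range.2 hj)
  simp

lemma poch_ne_zero_of_pos {r : ℝ} (j : ℕ) (h0 : r ≠ 0) (h1 : -1 < r) :
    poch (r : ℂ) j ≠ 0 := by
  rw [poch]
  apply Finset.prod_ne_zero_iff.2
  intro i _
  have : ((r : ℂ) + i) = ((r + i : ℝ) : ℂ) := by push_cast; ring
  rw [this, Ne, Complex.ofReal_eq_zero]
  rcases Nat.eq_zero_or_pos i with h | h
  · simpa [h] using h0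
  · have : (1 : ℝ) ≤ i := by exact_mod_cast h
    nlinarith

/-- Coefficient of the pseudo-Jacobi polynomial. -/
def cf (s : ℝ) (N m j : ℕ) : ℂ :=
  poch (-(m : ℂ)) j * poch ((s : ℂ) + N - m) j /
      (poch (2 * (s : ℂ) + 2 * N - 2 * m) j * (Nat.factorial j : ℂ)) *
    (-2 * Complex.I) ^ j

lemma pJC_eq (s : ℝ) (N m : ℕ) (x : ℝ) :
    pJC s N m x = ∑ j ∈ range (m+1), cf s N m j * ((x : ℂ) - Complex.I) ^ (m - j) := rfl

/-- First derivative of `pJC` (formula). -/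
def pd1 (s : ℝ) (N m : ℕ) (x : ℝ) : ℂ :=
  ∑ j ∈ range (m+1), cf s N m j * (((m - j : ℕ) : ℂ) * ((x : ℂ) - Complex.I) ^ (m - j - 1))

/-- Second derivative of `pJC` (formula). -/
def pd2 (s : ℝ) (N m : ℕ) (x : ℝ) : ℂ :=
  ∑ j ∈ range (m+1), cf s N m j * (((m - j : ℕ) : ℂ) * (((m - j - 1 : ℕ) : ℂ) *
    ((x : ℂ) - Complex.I) ^ (m - j - 1 - 1)))

lemma hasDerivAt_re_comp {f : ℝ → ℂ} {f' : ℂ} {x : ℝ} (h : HasDerivAt f f' x) :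
    HasDerivAt (fun y => (f y).re) f'.re x := by
  have := (Complex.reCLM.hasFDerivAt.comp x h.hasFDerivAt).hasDerivAt
  simpa [Function.comp_def] using this

lemma hasDerivAt_upow (k : ℕ) (x : ℝ) :
    HasDerivAt (fun y : ℝ => ((y : ℂ) - Complex.I) ^ k)
      ((k : ℂ) * ((x : ℂ) - Complex.I) ^ (k - 1)) x := by
  have h : HasDerivAt (fun z : ℂ => (z - Complex.I) ^ k)
      ((k : ℂ) * ((x : ℂ) - Complex.I) ^ (k - 1) * 1) (x : ℂ) := by
    simpa using ((hasDerivAt_id ((x:ℂ))).sub_const Complex.I).fun_pow k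
  simpa using h.comp_ofReal

lemma hasDerivAt_pJC (s : ℝ) (N m : ℕ) (x : ℝ) :
    HasDerivAt (fun y => pJC s N m y) (pd1 s N m x) x := by
  simp only [pJC_eq, pd1]
  exact HasDerivAt.fun_sum fun j _ => (hasDerivAt_upow (m - j) x).const_mul _

lemma hasDerivAt_pd1 (s : ℝ) (N m : ℕ) (x : ℝ) :
    HasDerivAt (fun y => pd1 s N m y) (pd2 s N m x) x := by
  simp only [pd1, pd2]
  exact HasDerivAt.fun_sum fun j _ =>
    (((hasDerivAt_upow (m - j - 1) x).const_mul _).const_mul _)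

/-- Key recurrence for the coefficients of the pseudo-Jacobi polynomial. -/
lemma cf_rec (s : ℝ) (hs : -(1/2) < s) (N m : ℕ) (hm : m ≤ N) (j : ℕ) (hj : j < m) :
    cf s N m (j+1) * (((j : ℂ)+1) * (2*(s:ℂ)+2*(N:ℂ)-2*(m:ℂ) + j)) =
      -(2*Complex.I) * cf s N m j * (((m:ℂ) - j) * ((m:ℂ) - j - ((s:ℂ)+N))) := by
  by_cases hα : s + (N : ℝ) = (m : ℝ)
  · have hB : ((s : ℂ) + N - m) = 0 := by
      have : ((s + N - m : ℝ) : ℂ) = 0 := by rw [hα]; simp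
      push_cast at this ⊢; linear_combination this
    rcases Nat.eq_zero_or_pos j with hj0 | hj0
    · subst hj0
      have hL : cf s N m 1 = 0 := by
        simp [cf, poch_succ, hB, poch]
      have hR : ((m:ℂ) - ((0:ℕ):ℂ) - ((s:ℂ)+N)) = 0 := by
        have : ((m - (s + N) : ℝ) : ℂ) = 0 := by rw [hα]; simp
        push_cast at this ⊢; linear_combination this
      rw [hL, hR]; ring
    · have hL : cf s N m (j+1) = 0 := by
        rw [cf, hB, poch_zero_left (by omega)]
        simp
      have hR : cf s N m j = 0 := by
        rw [cf, hB, poch_zero_left hj0]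
        simp
      rw [hL, hR]; ring
  · set r : ℝ := 2*s + 2*N - 2*m with hr
    have hr0 : r ≠ 0 := by
      intro h; apply hα; nlinarith [h]
    have hr1 : -1 < r := by
      have : (m : ℝ) ≤ (N : ℝ) := by exact_mod_cast hm
      nlinarith
    have hcast : 2*(s:ℂ)+2*(N:ℂ)-2*(m:ℂ) = ((r : ℝ) : ℂ) := by push_cast [hr]; ring
    have hCj : poch (2*(s:ℂ)+2*(N:ℂ)-2*(m:ℂ)) j ≠ 0 := by
      rw [hcast]; exact poch_ne_zero_of_pos j hr0 hr1
    have hCj1 : poch (2*(s:ℂ)+2*(N:ℂ)-2*(m:ℂ)) (j+1) ≠ 0 := by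
      rw [hcast]; exact poch_ne_zero_of_pos (j+1) hr0 hr1
    have htj : (2*(s:ℂ)+2*(N:ℂ)-2*(m:ℂ)) + j ≠ 0 := by
      intro h
      apply hCj1
      rw [poch_succ, h, mul_zero]
    have hfj : ((Nat.factorial j : ℂ)) ≠ 0 := by
      exact_mod_cast Nat.cast_ne_zero.2 (Nat.factorial_ne_zero j)
    have hfj1 : ((Nat.factorial (j+1) : ℂ)) ≠ 0 := by
      exact_mod_cast Nat.cast_ne_zero.2 (Nat.factorial_ne_zero (j+1))
    have hj1 : ((j : ℂ) + 1) ≠ 0 := by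
      exact Nat.cast_add_one_ne_zero j
    rw [cf, cf, poch_succ, poch_succ, poch_succ, Nat.factorial_succ]
    set A := poch (-(m : ℂ)) j with hA
    set B := poch ((s : ℂ) + N - m) j with hB
    set C := poch (2 * (s : ℂ) + 2 * N - 2 * m) j with hC
    push_cast
    set F := ((Nat.factorial j : ℕ) : ℂ) with hF
    set T := 2 * (s : ℂ) + 2 * (N : ℂ) - 2 * (m : ℂ) with hT
    field_simp
    ring

/-- The complex pseudo-Jacobi polynomial satisfies the hypergeometric ODE. -/
lemma odeC (s : ℝ) (hs : -(1/2) < s) (N m : ℕ) (hm : m ≤ N) (x : ℝ) :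
    (1+(x:ℂ)^2) * pd2 s N m x + 2*(1-((s:ℂ)+N))*(x:ℂ) * pd1 s N m x
      + (m:ℂ)*(2*((s:ℂ)+N)-(m:ℂ)-1) * pJC s N m x = 0 := by
  set u : ℂ := (x:ℂ) - Complex.I with hu
  have h1 : 1+(x:ℂ)^2 = u^2 + 2*Complex.I*u := by
    rw [hu]; linear_combination Complex.I_sq
  have hx : (x:ℂ) = u + Complex.I := by rw [hu]; ring
  have main : ∀ j ∈ range (m+1),
      (1+(x:ℂ)^2) * (cf s N m j * (((m - j : ℕ) : ℂ) * (((m - j - 1 : ℕ) : ℂ) * u ^ (m - j - 1 - 1))))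
      + 2*(1-((s:ℂ)+N))*(x:ℂ) * (cf s N m j * (((m - j : ℕ) : ℂ) * u ^ (m - j - 1)))
      + (m:ℂ)*(2*((s:ℂ)+N)-(m:ℂ)-1) * (cf s N m j * u ^ (m - j))
      = cf s N m j * ((j:ℂ) * (2*(s:ℂ)+2*(N:ℂ)-2*(m:ℂ) + (j:ℂ) - 1)) * u ^ (m - j)
        + cf s N m j * (2*Complex.I*(((m:ℂ)-(j:ℂ)) * (((m:ℂ)-(j:ℂ)) - ((s:ℂ)+N)))) * u ^ (m - j - 1) := by
    intro j hjm
    have hj : j ≤ m := by simpa [Nat.lt_succ_iff] using hjm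
    obtain ⟨k, hk⟩ : ∃ k, m = j + k := ⟨m - j, (Nat.add_sub_cancel' hj).symm⟩
    subst hk
    rw [h1, hx]
    simp only [Nat.add_sub_cancel_left]
    rcases k with _ | _ | l
    · push_cast; ring
    · push_cast; ring
    · simp only [show l+2-1-1 = l from rfl, show l+2-1 = l+1 from rfl, pow_succ]
      push_cast; ring
  have expand : (1+(x:ℂ)^2) * pd2 s N m x + 2*(1-((s:ℂ)+N))*(x:ℂ) * pd1 s N m x
      + (m:ℂ)*(2*((s:ℂ)+N)-(m:ℂ)-1) * pJC s N m x
    = (∑ j ∈ range (m+1), cf s N m j * ((j:ℂ) * (2*(s:ℂ)+2*(N:ℂ)-2*(m:ℂ) + (j:ℂ) - 1)) * u ^ (m - j))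
      + ∑ j ∈ range (m+1), cf s N m j * (2*Complex.I*(((m:ℂ)-(j:ℂ)) * (((m:ℂ)-(j:ℂ)) - ((s:ℂ)+N)))) * u ^ (m - j - 1) := by
    rw [pd1, pd2, pJC_eq, Finset.mul_sum, Finset.mul_sum, Finset.mul_sum,
      ← Finset.sum_add_distrib, ← Finset.sum_add_distrib, ← Finset.sum_add_distrib]
    exact Finset.sum_congr rfl main
  rw [expand]
  rw [Finset.sum_range_succ' (fun j => cf s N m j * ((j:ℂ) * (2*(s:ℂ)+2*(N:ℂ)-2*(m:ℂ) + (j:ℂ) - 1)) * u ^ (m - j)) m]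
  rw [Finset.sum_range_succ (fun j => cf s N m j * (2*Complex.I*(((m:ℂ)-(j:ℂ)) * (((m:ℂ)-(j:ℂ)) - ((s:ℂ)+N)))) * u ^ (m - j - 1)) m]
  have hz1 : cf s N m 0 * (((0:ℕ):ℂ) * (2*(s:ℂ)+2*(N:ℂ)-2*(m:ℂ) + ((0:ℕ):ℂ) - 1)) * u ^ (m - 0) = 0 := by
    simp
  have hz2 : cf s N m m * (2*Complex.I*(((m:ℂ)-(m:ℂ)) * (((m:ℂ)-(m:ℂ)) - ((s:ℂ)+N)))) * u ^ (m - m - 1) = 0 := by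
    simp
  rw [hz1, hz2, add_zero, add_zero, ← Finset.sum_add_distrib]
  apply Finset.sum_eq_zero
  intro j hjm
  have hj : j < m := Finset.mem_range.1 hjm
  have hsub : m - j - 1 = m - (j+1) := by omega
  rw [hsub]
  have := cf_rec s hs N m hm j hj
  push_cast
  linear_combination u ^ (m - (j+1)) * this

lemma hasDerivAt_pJ (s : ℝ) (N m : ℕ) (x : ℝ) :
    HasDerivAt (pJ s N m) ((pd1 s N m x).re) x :=
  hasDerivAt_re_comp (hasDerivAt_pJC s N m x)

lemma deriv_pJ (s : ℝ) (N m : ℕ) :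
    deriv (pJ s N m) = fun x => (pd1 s N m x).re :=
  funext fun x => (hasDerivAt_pJ s N m x).deriv

/-- The real pseudo-Jacobi polynomial satisfies the hypergeometric ODE. -/
lemma odeR (s : ℝ) (hs : -(1/2) < s) (N m : ℕ) (hm : m ≤ N) (x : ℝ) :
    (1+x^2) * (pd2 s N m x).re + 2*(1-(s+(N:ℝ)))*x*(pd1 s N m x).re
      + (m:ℝ)*(2*(s+(N:ℝ))-(m:ℝ)-1) * pJ s N m x = 0 := by
  have h := congrArg Complex.re (odeC s hs N m hm x)
  have c1 : (1+(x:ℂ)^2) = ((1+x^2 : ℝ) : ℂ) := by push_cast; ring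
  have c2 : 2*(1-((s:ℂ)+(N:ℂ)))*(x:ℂ) = ((2*(1-(s+(N:ℝ)))*x : ℝ) : ℂ) := by push_cast; ring
  have c3 : (m:ℂ)*(2*((s:ℂ)+(N:ℂ))-(m:ℂ)-1) = (((m:ℝ)*(2*(s+(N:ℝ))-(m:ℝ)-1) : ℝ) : ℂ) := by
    push_cast; ring
  rw [c1, c2, c3] at h
  simp only [Complex.add_re, Complex.re_ofReal_mul, Complex.zero_re] at h
  exact h

end Aux

theorem stmt10 (s : ℝ) (hs : -(1 / 2) < s) (N : ℕ) (hN : 1 ≤ N) (x : ℝ) :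
    deriv (fun y : ℝ => (1 + y ^ 2) * rho s N y) x =
      -2 * s * gammaSq s N * phi s N x * pJ s N N x * pJ s N (N - 1) x := by
  have h1p : (0:ℝ) < 1 + x^2 := by positivity
  have hNc : ((N-1 : ℕ) : ℝ) = (N:ℝ) - 1 := by
    rw [Nat.cast_sub hN]; simp
  have hG : (fun y : ℝ => (1 + y ^ 2) * rho s N y)
      = fun y => gammaSq s N * (((1+y^2) * phi s N y) *
          (pJ s N (N-1) y * (pd1 s N N y).re - pJ s N N y * (pd1 s N (N-1) y).re)) := by
    funext y
    simp only [rho, deriv_pJ]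
    ring
  rw [hG]
  have hq : HasDerivAt (fun y : ℝ => 1+y^2) (2*x) x := by
    simpa using ((hasDerivAt_pow 2 x).const_add 1)
  have hphi : HasDerivAt (fun y => phi s N y)
      ((2*x) * (-((N:ℝ)+s)) * (1+x^2)^((-((N:ℝ)+s))-1)) x := by
    exact hq.rpow_const (Or.inl h1p.ne')
  have hA : HasDerivAt (fun y => (1+y^2) * phi s N y)
      (2*x * phi s N x + (1+x^2) * ((2*x) * (-((N:ℝ)+s)) * (1+x^2)^((-((N:ℝ)+s))-1))) x :=
    hq.mul hphi
  have ha := hasDerivAt_pJ s N N x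
  have hb := hasDerivAt_pJ s N (N-1) x
  have hda := hasDerivAt_re_comp (hasDerivAt_pd1 s N N x)
  have hdb := hasDerivAt_re_comp (hasDerivAt_pd1 s N (N-1) x)
  have hW := (hb.fun_mul hda).fun_sub (ha.fun_mul hdb)
  have hAll := (hA.fun_mul hW).const_mul (gammaSq s N)
  rw [hAll.deriv]
  have E1 := odeR s hs N N le_rfl x
  have E2 := odeR s hs N (N-1) (Nat.sub_le N 1) x
  rw [hNc] at E2
  have key1 : (1+x^2) * (1+x^2)^((-((N:ℝ)+s))-1) = (1+x^2)^(-((N:ℝ)+s)) := by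
    have h := Real.rpow_add h1p (-((N:ℝ)+s)-1) 1
    rw [Real.rpow_one] at h
    rw [show (-((N:ℝ)+s)-1)+1 = -((N:ℝ)+s) from by ring] at h
    linarith [h]
  have hphix : phi s N x = (1+x^2)^(-((N:ℝ)+s)) := rfl
  rw [hphix]
  linear_combination (2*x*(-((N:ℝ)+s))*(gammaSq s N)*(pJ s N (N-1) x * (pd1 s N N x).re
      - pJ s N N x * (pd1 s N (N-1) x).re)) * key1
    + ((gammaSq s N)*(1+x^2)^(-((N:ℝ)+s))*(pJ s N (N-1) x)) * E1
    - ((gammaSq s N)*(1+x^2)^(-((N:ℝ)+s))*(pJ s N N x)) * E2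

end
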